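/- Let T : H → H be a bounded left ℍ-linear map on H = L²(μ, ℍ), and let T' : H → H be a bounded left ℍ-linear adjoint of T (⟪T u, v⟫ = ⟪u, T' v⟫ for all u, v ∈ H) with T ∘ T' = T' ∘ T. Suppose T u = p • u and T v = r • v for some u, v ∈ H and p, r ∈ ℍ with θ(p) ≠ θ(r), where θ(q) = {λ·q·λ⁻¹ : λ ∈ ℍ, λ ≠ 0}. Then ⟪u, v⟫ = 0. -/

import Mathlib

open MeasureTheory

/-- The quaternion-valued inner product on `H = L²(μ, ℍ)`:
`⟪u, v⟫ = ∫ u(x) · conj(v(x)) dμ(x)`. -/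
noncomputable def qInnerL2 {X : Type*} [MeasurableSpace X] (μ : Measure X)
    (u v : Lp (Quaternion ℝ) 2 μ) : Quaternion ℝ :=
  ∫ x, u x * star (v x) ∂μ

/-- A map `T : L²(μ, ℍ) → L²(μ, ℍ)` is left ℍ-linear. -/
def LeftHLinearL2 {X : Type*} [MeasurableSpace X] {μ : Measure X}
    (T : Lp (Quaternion ℝ) 2 μ → Lp (Quaternion ℝ) 2 μ) : Prop :=
  ∀ (p q : Quaternion ℝ) (u v : Lp (Quaternion ℝ) 2 μ),
    T (p • u + q • v) = p • T u + q • T v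

/-- A map `T : L²(μ, ℍ) → L²(μ, ℍ)` is bounded. -/
def BoundedOpL2 {X : Type*} [MeasurableSpace X] {μ : Measure X}
    (T : Lp (Quaternion ℝ) 2 μ → Lp (Quaternion ℝ) 2 μ) : Prop :=
  ∃ c : ℝ, 0 ≤ c ∧ ∀ u, ‖T u‖ ≤ c * ‖u‖


/-- The similarity orbit of a quaternion: `θ(q) = {λ q λ⁻¹ : λ ∈ ℍ \ {0}}`. -/
def simOrbit (q : Quaternion ℝ) : Set (Quaternion ℝ) :=
  {p | ∃ l : Quaternion ℝ, l ≠ 0 ∧ p = l * q * l⁻¹}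

namespace QOrthAux

open Quaternion Filter

variable {X : Type*} [MeasurableSpace X] {μ : Measure X}

/-! ### Basic properties of the quaternionic inner product on `L²(μ, ℍ)` -/

/-- Star on quaternions as a continuous ℝ-linear map. -/
noncomputable def starCLM : Quaternion ℝ →L[ℝ] Quaternion ℝ where
  toFun := star
  map_add' := star_add
  map_smul' := fun c x => by simp [Quaternion.star_smul c x]
  cont := continuous_star

lemma integrable_qInner (u v : Lp (Quaternion ℝ) 2 μ) :
    Integrable (fun x => u x * star (v x)) μ := by
  have hv : MemLp (fun x => star (v x)) 2 μ := by
    refine ⟨continuous_star.comp_aestronglyMeasurable (Lp.aestronglyMeasurable v), ?_⟩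
    calc eLpNorm (fun x => star (v x)) 2 μ ≤ eLpNorm (fun x => v x) 2 μ :=
          eLpNorm_mono (fun x => by simp)
      _ < ⊤ := Lp.eLpNorm_lt_top v
  exact memLp_one_iff_integrable.mp
    (hv.smul (Lp.memLp u) :
      MemLp ((fun x => u x) • (fun x => star (v x))) 1 μ)

lemma qInner_add_left (u w v : Lp (Quaternion ℝ) 2 μ) :
    qInnerL2 μ (u + w) v = qInnerL2 μ u v + qInnerL2 μ w v := by
  unfold qInnerL2
  rw [← integral_add (integrable_qInner u v) (integrable_qInner w v)]
  refine integral_congr_ae ?_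
  filter_upwards [Lp.coeFn_add u w] with x hx
  rw [hx, Pi.add_apply, add_mul]

lemma qInner_add_right (u w v : Lp (Quaternion ℝ) 2 μ) :
    qInnerL2 μ u (w + v) = qInnerL2 μ u w + qInnerL2 μ u v := by
  unfold qInnerL2
  rw [← integral_add (integrable_qInner u w) (integrable_qInner u v)]
  refine integral_congr_ae ?_
  filter_upwards [Lp.coeFn_add w v] with x hx
  rw [hx, Pi.add_apply, star_add, mul_add]

lemma qInner_smul_left (p : Quaternion ℝ) (u v : Lp (Quaternion ℝ) 2 μ) :
    qInnerL2 μ (p • u) v = p * qInnerL2 μ u v := by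
  unfold qInnerL2
  have h := (ContinuousLinearMap.mul ℝ (Quaternion ℝ) p).integral_comp_comm
    (integrable_qInner u v)
  simp only [ContinuousLinearMap.mul_apply'] at h
  rw [← h]
  refine integral_congr_ae ?_
  filter_upwards [Lp.coeFn_smul p u] with x hx
  rw [hx, Pi.smul_apply, smul_eq_mul, mul_assoc]

lemma qInner_smul_right (p : Quaternion ℝ) (u v : Lp (Quaternion ℝ) 2 μ) :
    qInnerL2 μ u (p • v) = qInnerL2 μ u v * star p := by
  unfold qInnerL2
  have h := ((ContinuousLinearMap.mul ℝ (Quaternion ℝ)).flip (star p)).integral_comp_comm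
    (integrable_qInner u v)
  simp only [ContinuousLinearMap.flip_apply, ContinuousLinearMap.mul_apply'] at h
  rw [← h]
  refine integral_congr_ae ?_
  filter_upwards [Lp.coeFn_smul p v] with x hx
  rw [hx, Pi.smul_apply, smul_eq_mul, star_mul, mul_assoc]

lemma qInner_star (u v : Lp (Quaternion ℝ) 2 μ) :
    star (qInnerL2 μ u v) = qInnerL2 μ v u := by
  unfold qInnerL2
  have h := starCLM.integral_comp_comm (integrable_qInner u v)
  have hs : ∀ q : Quaternion ℝ, starCLM q = star q := fun q => rfl
  simp only [hs] at h
  rw [← h]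
  exact integral_congr_ae (Eventually.of_forall fun x => by simp [star_mul])

lemma qInner_zero_right (u : Lp (Quaternion ℝ) 2 μ) : qInnerL2 μ u 0 = 0 := by
  unfold qInnerL2
  refine integral_eq_zero_of_ae ?_
  filter_upwards [Lp.coeFn_zero (Quaternion ℝ) 2 μ] with x hx
  rw [hx, Pi.zero_apply, star_zero, mul_zero]

lemma qInner_self_eq_zero {w : Lp (Quaternion ℝ) 2 μ} (h : qInnerL2 μ w w = 0) : w = 0 := by
  have hig : Integrable (fun x => normSq (w x)) μ :=
    ((integrable_qInner w w).norm).congr (Eventually.of_forall fun x => by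
      simp [norm_mul, Quaternion.normSq_eq_norm_mul_self])
  have hcoe : qInnerL2 μ w w = ((∫ x, normSq (w x) ∂μ : ℝ) : Quaternion ℝ) := by
    unfold qInnerL2
    have h2 := (algebraMapCLM ℝ (Quaternion ℝ)).integral_comp_comm hig
    have halg : ∀ y : ℝ, algebraMapCLM ℝ (Quaternion ℝ) y = (y : Quaternion ℝ) := fun y => rfl
    simp only [halg] at h2
    rw [← h2]
    exact integral_congr_ae (Eventually.of_forall fun x =>
      Quaternion.self_mul_star (w x))
  rw [hcoe] at h
  have hint : ∫ x, normSq (w x) ∂μ = 0 := Quaternion.coe_injective (by simpa using h)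
  have hz : (fun x => normSq (w x)) =ᵐ[μ] 0 :=
    (integral_eq_zero_iff_of_nonneg (fun x => normSq_nonneg) hig).mp hint
  rw [Lp.eq_zero_iff_ae_eq_zero]
  filter_upwards [hz] with x hx
  simpa [Quaternion.normSq_eq_zero] using hx

lemma qInner_neg_left (u v : Lp (Quaternion ℝ) 2 μ) :
    qInnerL2 μ (-u) v = -qInnerL2 μ u v := by
  have h := qInner_smul_left (-1 : Quaternion ℝ) u v
  rwa [neg_one_smul, neg_one_mul] at h

lemma qInner_sub_left (u w v : Lp (Quaternion ℝ) 2 μ) :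
    qInnerL2 μ (u - w) v = qInnerL2 μ u v - qInnerL2 μ w v := by
  rw [sub_eq_add_neg, qInner_add_left, qInner_neg_left, ← sub_eq_add_neg]

lemma qInner_neg_right (u v : Lp (Quaternion ℝ) 2 μ) :
    qInnerL2 μ u (-v) = -qInnerL2 μ u v := by
  have h := qInner_smul_right (-1 : Quaternion ℝ) u v
  rwa [neg_one_smul, star_neg, star_one, mul_neg_one] at h

lemma qInner_sub_right (u w v : Lp (Quaternion ℝ) 2 μ) :
    qInnerL2 μ u (w - v) = qInnerL2 μ u w - qInnerL2 μ u v := by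
  rw [sub_eq_add_neg, qInner_add_right, qInner_neg_right, ← sub_eq_add_neg]

lemma qInner_coe_smul_right (t : ℝ) (u v : Lp (Quaternion ℝ) 2 μ) :
    qInnerL2 μ u ((t : Quaternion ℝ) • v) = (t : Quaternion ℝ) * qInnerL2 μ u v := by
  rw [qInner_smul_right, Quaternion.star_coe, ← Quaternion.coe_commutes]

/-! ### Quaternion algebra lemmas -/

/-- Cayley–Hamilton for a quaternion. -/
lemma char_id (p : Quaternion ℝ) :
    p * p - ((2 * p.re : ℝ) : Quaternion ℝ) * p + ((normSq p : ℝ) : Quaternion ℝ) = 0 := by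
  have h2 : star p = ((2 * p.re : ℝ) : Quaternion ℝ) - p := by
    ext <;> simp [Quaternion.re_coe, Quaternion.imI_coe, Quaternion.imJ_coe,
      Quaternion.imK_coe] <;> ring
  have hc : ((2 * p.re : ℝ) : Quaternion ℝ) * p = p * ((2 * p.re : ℝ) : Quaternion ℝ) :=
    Quaternion.coe_commutes _ _
  rw [← Quaternion.self_mul_star p, h2, mul_sub, hc]
  abel

/-- Similar quaternions have equal similarity orbits. -/
lemma simOrbit_eq_of_similar {p r l : Quaternion ℝ} (hl : l ≠ 0) (hr : r = l * p * l⁻¹) :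
    simOrbit p = simOrbit r := by
  have hll : l⁻¹ * l = 1 := inv_mul_cancel₀ hl
  ext s
  constructor
  · rintro ⟨m, hm, rfl⟩
    refine ⟨m * l⁻¹, mul_ne_zero hm (inv_ne_zero hl), ?_⟩
    calc m * p * m⁻¹ = m * (l⁻¹ * l) * p * ((l⁻¹ * l) * m⁻¹) := by
          rw [hll, mul_one, one_mul]
      _ = m * l⁻¹ * r * (m * l⁻¹)⁻¹ := by
          rw [hr, mul_inv_rev, inv_inv]; simp only [mul_assoc]
  · rintro ⟨m, hm, rfl⟩
    refine ⟨m * l, mul_ne_zero hm hl, ?_⟩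
    calc m * r * m⁻¹ = m * (l * p * l⁻¹) * m⁻¹ := by rw [hr]
      _ = m * l * p * (m * l)⁻¹ := by
          rw [mul_inv_rev]; simp only [mul_assoc]

lemma similar_of_conj {p r l : Quaternion ℝ} (hl : l ≠ 0) (key : l * p = r * l) :
    r = l * p * l⁻¹ := by
  rw [key, mul_assoc, mul_inv_cancel₀ hl, mul_one]

/-- Two quaternions with the same real part and the same norm are similar. -/
lemma simOrbit_eq_of_re_normSq {p r : Quaternion ℝ} (hre : p.re = r.re)
    (hns : normSq p = normSq r) : simOrbit p = simOrbit r := by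
  have him : p.imI^2 + p.imJ^2 + p.imK^2 = r.imI^2 + r.imJ^2 + r.imK^2 := by
    rw [normSq_def', normSq_def', hre] at hns; linarith
  by_cases hsum : (⟨0, p.imI + r.imI, p.imJ + r.imJ, p.imK + r.imK⟩ : Quaternion ℝ) = 0
  · -- Im r = -Im p
    rw [QuaternionAlgebra.ext_iff] at hsum
    obtain ⟨-, h1, h2, h3⟩ := hsum
    simp only [QuaternionAlgebra.imI_zero, QuaternionAlgebra.imJ_zero, QuaternionAlgebra.imK_zero] at h1 h2 h3
    by_cases hIm : p.imI = 0 ∧ p.imJ = 0 ∧ p.imK = 0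
    · obtain ⟨e1, e2, e3⟩ := hIm
      have : p = r := by
        ext <;> first
          | exact hre
          | (simp only [e1, e2, e3] at h1 h2 h3 ⊢ <;> linarith)
      rw [this]
    · by_cases hbc : p.imI = 0 ∧ p.imJ = 0
      · obtain ⟨e1, e2⟩ := hbc
        have hd : p.imK ≠ 0 := fun h => hIm ⟨e1, e2, h⟩
        set l : Quaternion ℝ := ⟨0, 1, 0, 0⟩ with hldef
        have hl : l ≠ 0 := by
          intro h
          rw [Quaternion.ext_iff] at h
          simp [hldef] at h
        refine simOrbit_eq_of_similar hl (similar_of_conj hl ?_)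
        ext <;> simp only [Quaternion.re_mul, Quaternion.imI_mul, Quaternion.imJ_mul, Quaternion.imK_mul] <;>
          simp [hldef, Quaternion.re_mul, Quaternion.imI_mul, Quaternion.imJ_mul,
            Quaternion.imK_mul, e1, e2, hre] <;>
          linarith
      · set l : Quaternion ℝ := ⟨0, p.imJ, -p.imI, 0⟩ with hldef
        have hl : l ≠ 0 := by
          intro h
          rw [Quaternion.ext_iff] at h
          simp only [hldef, Quaternion.imI_zero, Quaternion.imJ_zero] at h
          exact hbc ⟨neg_eq_zero.mp h.2.2.1, h.2.1⟩
        refine simOrbit_eq_of_similar hl (similar_of_conj hl ?_)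
        ext <;> simp only [Quaternion.re_mul, Quaternion.imI_mul, Quaternion.imJ_mul, Quaternion.imK_mul] <;>
          simp [hldef, Quaternion.re_mul, Quaternion.imI_mul, Quaternion.imJ_mul,
            Quaternion.imK_mul, hre] <;>
          first
            | linear_combination p.imJ * h1 - p.imI * h2
            | linear_combination (-p.imI) * h3
            | linear_combination (-p.imJ) * h3
            | linear_combination p.imI * h1 + p.imJ * h2
  · set l : Quaternion ℝ := ⟨0, p.imI + r.imI, p.imJ + r.imJ, p.imK + r.imK⟩ with hldef
    refine simOrbit_eq_of_similar hsum (similar_of_conj hsum ?_)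
    ext <;> simp only [Quaternion.re_mul, Quaternion.imI_mul, Quaternion.imJ_mul, Quaternion.imK_mul] <;>
      simp [hldef, Quaternion.re_mul, Quaternion.imI_mul, Quaternion.imJ_mul,
        Quaternion.imK_mul, hre] <;>
      linarith [him]

/-- If `p` is a root of the characteristic polynomial of `r`, then `p` and `r`
have the same similarity orbit. -/
lemma orbit_eq_of_root {p r : Quaternion ℝ}
    (h : p * p - ((2 * r.re : ℝ) : Quaternion ℝ) * p + ((normSq r : ℝ) : Quaternion ℝ) = 0) :
    simOrbit p = simOrbit r := by
  have hp := char_id p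
  have hdiff : ((2 * r.re - 2 * p.re : ℝ) : Quaternion ℝ) * p
      + ((normSq p - normSq r : ℝ) : Quaternion ℝ) = 0 := by
    calc ((2 * r.re - 2 * p.re : ℝ) : Quaternion ℝ) * p
          + ((normSq p - normSq r : ℝ) : Quaternion ℝ)
        = (p * p - ((2 * p.re : ℝ) : Quaternion ℝ) * p + ((normSq p : ℝ) : Quaternion ℝ))
          - (p * p - ((2 * r.re : ℝ) : Quaternion ℝ) * p + ((normSq r : ℝ) : Quaternion ℝ)) := by
          rw [Quaternion.coe_sub, Quaternion.coe_sub, sub_mul]; abel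
      _ = 0 := by rw [hp, h, sub_zero]
  by_cases hre : p.re = r.re
  · refine simOrbit_eq_of_re_normSq hre ?_
    rw [hre] at hdiff
    simp only [sub_self, Quaternion.coe_zero, zero_mul, zero_add] at hdiff
    have : normSq p - normSq r = 0 := by
      have := congrArg QuaternionAlgebra.re hdiff
      simpa [Quaternion.re_coe] using this
    linarith
  · exfalso
    set t : ℝ := 2 * r.re - 2 * p.re with ht
    have htne : t ≠ 0 := by simp [ht]; intro hc; exact hre (by linarith)
    have hI : p.imI = 0 := by
      have := congrArg QuaternionAlgebra.imI hdiff
      simp [Quaternion.imI_mul, Quaternion.re_coe, Quaternion.imI_coe, Quaternion.imJ_coe,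
        Quaternion.imK_coe] at this
      rcases this with h' | h'
      · exact absurd h' htne
      · exact h'
    have hJ : p.imJ = 0 := by
      have := congrArg QuaternionAlgebra.imJ hdiff
      simp [Quaternion.imJ_mul, Quaternion.re_coe, Quaternion.imI_coe, Quaternion.imJ_coe,
        Quaternion.imK_coe] at this
      rcases this with h' | h'
      · exact absurd h' htne
      · exact h'
    have hK : p.imK = 0 := by
      have := congrArg QuaternionAlgebra.imK hdiff
      simp [Quaternion.imK_mul, Quaternion.re_coe, Quaternion.imI_coe, Quaternion.imJ_coe,
        Quaternion.imK_coe] at this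
      rcases this with h' | h'
      · exact absurd h' htne
      · exact h'
    have hres := congrArg QuaternionAlgebra.re h
    simp [Quaternion.re_mul, Quaternion.re_coe, Quaternion.imI_coe, Quaternion.imJ_coe,
      Quaternion.imK_coe, hI, hJ, hK] at hres
    rw [Quaternion.normSq_def'] at hres
    have hsq : (p.re - r.re) ^ 2 ≤ 0 := by
      nlinarith [sq_nonneg r.imI, sq_nonneg r.imJ, sq_nonneg r.imK]
    have : (p.re - r.re) ^ 2 = 0 := le_antisymm hsq (sq_nonneg _)
    exact hre (by nlinarith [this])

/-! ### Operators -/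

/-- A left ℍ-linear map on `L²(μ, ℍ)` as a linear endomorphism. -/
noncomputable def mkEnd (T : Lp (Quaternion ℝ) 2 μ → Lp (Quaternion ℝ) 2 μ) (hT : LeftHLinearL2 T) :
    Module.End (Quaternion ℝ) (Lp (Quaternion ℝ) 2 μ) where
  toFun := T
  map_add' := fun a b => by simpa using hT 1 1 a b
  map_smul' := fun c a => by simpa using hT c 0 a a

@[simp] lemma mkEnd_apply (T : Lp (Quaternion ℝ) 2 μ → Lp (Quaternion ℝ) 2 μ)
    (hT : LeftHLinearL2 T) (w : Lp (Quaternion ℝ) 2 μ) : mkEnd T hT w = T w := rfl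

/-- Scalar multiplication by a real number as a (left ℍ-linear) endomorphism. -/
noncomputable def scalR (t : ℝ) : Module.End (Quaternion ℝ) (Lp (Quaternion ℝ) 2 μ) where
  toFun := fun w => ((t : ℝ) : Quaternion ℝ) • w
  map_add' := fun w z => smul_add _ w z
  map_smul' := fun c w => by
    simp only [RingHom.id_apply, smul_smul, Quaternion.coe_commutes]

@[simp] lemma scalR_apply (t : ℝ) (w : Lp (Quaternion ℝ) 2 μ) :
    scalR t w = ((t : ℝ) : Quaternion ℝ) • w := rfl

end QOrthAux

open QOrthAux Quaternion in
/-- Eigenvectors of a bounded left ℍ-linear normal operator on `L²(μ, ℍ)` belonging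
to eigenvalues with distinct similarity orbits are orthogonal. -/
theorem eigenvectors_orthogonal_of_distinct_orbits {X : Type*} [MeasurableSpace X]
    (μ : Measure X)
    (T T' : Lp (Quaternion ℝ) 2 μ → Lp (Quaternion ℝ) 2 μ)
    (hT : LeftHLinearL2 T) (hTb : BoundedOpL2 T)
    (hT' : LeftHLinearL2 T') (hT'b : BoundedOpL2 T')
    (hadj : ∀ u v, qInnerL2 μ (T u) v = qInnerL2 μ u (T' v))
    (hnormal : T ∘ T' = T' ∘ T)
    (u v : Lp (Quaternion ℝ) 2 μ) (p r : Quaternion ℝ)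
    (hu : T u = p • u) (hv : T v = r • v)
    (horb : simOrbit p ≠ simOrbit r) :
    qInnerL2 μ u v = 0 := by
  classical
  by_contra hq0
  set A := mkEnd T hT with hA
  set B := mkEnd T' hT' with hB
  set cr : ℝ := 2 * r.re with hcr
  set nr : ℝ := normSq r with hnr
  set C : Module.End (Quaternion ℝ) (Lp (Quaternion ℝ) 2 μ) :=
    A * A - scalR cr * A + scalR nr with hCdef
  set C' : Module.End (Quaternion ℝ) (Lp (Quaternion ℝ) 2 μ) :=
    B * B - scalR cr * B + scalR nr with hC'def
  -- commutation relations
  have hab : Commute A B := LinearMap.ext fun w => congrFun hnormal w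
  have haS : ∀ t : ℝ, Commute A (scalR t) := fun t => LinearMap.ext fun w =>
    A.map_smul ((t : ℝ) : Quaternion ℝ) w
  have hbS : ∀ t : ℝ, Commute B (scalR t) := fun t => LinearMap.ext fun w =>
    B.map_smul ((t : ℝ) : Quaternion ℝ) w
  have hSS : ∀ s t : ℝ, Commute (scalR s : Module.End (Quaternion ℝ) (Lp (Quaternion ℝ) 2 μ))
      (scalR t) := fun s t => LinearMap.ext fun w => by
    show ((s : ℝ) : Quaternion ℝ) • ((t : ℝ) : Quaternion ℝ) • w
      = ((t : ℝ) : Quaternion ℝ) • ((s : ℝ) : Quaternion ℝ) • w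
    rw [smul_smul, smul_smul, Quaternion.coe_commutes]
  have hAC' : Commute A C' :=
    ((hab.mul_right hab).sub_right ((haS cr).mul_right hab)).add_right (haS nr)
  have hSC' : ∀ t : ℝ, Commute (scalR t : Module.End (Quaternion ℝ) (Lp (Quaternion ℝ) 2 μ)) C' :=
    fun t =>
      (((hbS t).symm.mul_right (hbS t).symm).sub_right
        ((hSS t cr).mul_right (hbS t).symm)).add_right (hSS t nr)
  have hCC' : Commute C C' :=
    ((hAC'.mul_left hAC').sub_left ((hSC' cr).mul_left hAC')).add_left (hSC' nr)
  -- adjoint relations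
  have hadj2 : ∀ a b, qInnerL2 μ (T' a) b = qInnerL2 μ a (T b) := fun a b => by
    have h := congrArg star (hadj b a)
    rw [qInner_star, qInner_star] at h
    exact h.symm
  have happC : ∀ w, C w = T (T w) - ((cr : ℝ) : Quaternion ℝ) • T w
      + ((nr : ℝ) : Quaternion ℝ) • w := fun w => rfl
  have happC' : ∀ w, C' w = T' (T' w) - ((cr : ℝ) : Quaternion ℝ) • T' w
      + ((nr : ℝ) : Quaternion ℝ) • w := fun w => rfl
  have hC'adjC : ∀ a b, qInnerL2 μ (C' a) b = qInnerL2 μ a (C b) := fun a b => by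
    rw [happC' a, happC b, qInner_add_left, qInner_sub_left,
      qInner_add_right, qInner_sub_right,
      qInner_smul_left, qInner_smul_left,
      qInner_coe_smul_right, qInner_coe_smul_right]
    simp only [hadj2]
  have hCadjC' : ∀ a b, qInnerL2 μ (C a) b = qInnerL2 μ a (C' b) := fun a b => by
    rw [happC a, happC' b, qInner_add_left, qInner_sub_left,
      qInner_add_right, qInner_sub_right,
      qInner_smul_left, qInner_smul_left,
      qInner_coe_smul_right, qInner_coe_smul_right]
    simp only [hadj]
  -- action on the eigenvectors
  have hCu : C u = (p * p - ((cr : ℝ) : Quaternion ℝ) * p + ((nr : ℝ) : Quaternion ℝ)) • u := by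
    have h1 : T (T u) = (p * p) • u := by
      rw [hu, show T (p • u) = p • T u from A.map_smul p u, hu, smul_smul]
    rw [happC u, h1, hu, smul_smul, ← sub_smul, ← add_smul]
  have hCv0 : C v = 0 := by
    have h1 : T (T v) = (r * r) • v := by
      rw [hv, show T (r • v) = r • T v from A.map_smul r v, hv, smul_smul]
    rw [happC v, h1, hv, smul_smul, ← sub_smul, ← add_smul, hcr, hnr,
      show (r * r - ((2 * r.re : ℝ) : Quaternion ℝ) * r + ((normSq r : ℝ) : Quaternion ℝ)) = 0
        from char_id r, zero_smul]
  -- C' v = 0 by normality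
  have hC'v0 : C' v = 0 := by
    apply qInner_self_eq_zero
    have h1 := hC'adjC v (C' v)
    have h2 : C (C' v) = 0 := by
      have h3 := LinearMap.congr_fun hCC'.eq v
      rw [Module.End.mul_apply, Module.End.mul_apply, hCv0, map_zero] at h3
      exact h3
    rw [h1, h2, qInner_zero_right]
  -- conclusion
  have hw := hCadjC' u v
  rw [hC'v0, qInner_zero_right, hCu, qInner_smul_left] at hw
  have hw0 : p * p - ((cr : ℝ) : Quaternion ℝ) * p + ((nr : ℝ) : Quaternion ℝ) = 0 := by
    rcases mul_eq_zero.mp hw with h | h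
    · exact h
    · exact absurd h hq0
  rw [hcr, hnr] at hw0
  exact horb (orbit_eq_of_root hw0)
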